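/- Let R be a commutative ring and consider a square of R-module inclusions L₁ ⊆ V₁, L₂ ⊆ V₂ with L₁ ⊆ L₂ and V₁ ⊆ V₂. Suppose (1) V₁/L₁ and V₂/L₂ are finitely generated projective R-modules, (2) their projective rank functions are constant on Spec R and equal, and (3) V₂/V₁ is a free R-module of rank r. Then L₂/L₁ is a projective R-module with constant projective rank function equal to r. -/

import Mathlib

set_option maxHeartbeats 1000000

open LinearMap Submodule

section Aux

variable {R : Type*} [CommRing R]

/-- Localization commutes with binary products. -/
theorem my_isLocalizedModule_prodMap (S : Submonoid R)
    {M N M' N' : Type*} [AddCommGroup M] [AddCommGroup N] [AddCommGroup M'] [AddCommGroup N']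
    [Module R M] [Module R N] [Module R M'] [Module R N']
    (f : M →ₗ[R] M') (g : N →ₗ[R] N')
    [IsLocalizedModule S f] [IsLocalizedModule S g] :
    IsLocalizedModule S (f.prodMap g) where
  map_units s := by
    have hf := (Module.End.isUnit_iff _).mp (IsLocalizedModule.map_units f s)
    have hg := (Module.End.isUnit_iff _).mp (IsLocalizedModule.map_units g s)
    rw [Module.End.isUnit_iff]
    constructor
    · intro x y h
      simp only [Module.algebraMap_end_apply, Prod.smul_def, Prod.ext_iff] at h
      refine Prod.ext (hf.injective ?_) (hg.injective ?_)
      · simpa only [Module.algebraMap_end_apply] using h.1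
      · simpa only [Module.algebraMap_end_apply] using h.2
    · intro x
      obtain ⟨a, ha⟩ := hf.surjective x.1
      obtain ⟨b, hb⟩ := hg.surjective x.2
      refine ⟨(a, b), ?_⟩
      simp only [Module.algebraMap_end_apply] at ha hb ⊢
      exact Prod.ext (by simpa [Prod.smul_def] using ha) (by simpa [Prod.smul_def] using hb)
  surj y := by
    obtain ⟨⟨m, s⟩, hms⟩ := IsLocalizedModule.surj S f y.1
    obtain ⟨⟨n, t⟩, hnt⟩ := IsLocalizedModule.surj S g y.2
    refine ⟨⟨((t : R) • m, (s : R) • n), s * t⟩, Prod.ext ?_ ?_⟩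
    · show ((s * t : S) • y).1 = f ((t : R) • m)
      rw [Prod.smul_fst, Submonoid.smul_def, Submonoid.coe_mul, map_smul, mul_comm, mul_smul,
        ← Submonoid.smul_def s y.1, hms]
    · show ((s * t : S) • y).2 = g ((s : R) • n)
      rw [Prod.smul_snd, Submonoid.smul_def, Submonoid.coe_mul, map_smul, mul_smul,
        ← Submonoid.smul_def t y.2, hnt]
  exists_of_eq {x y} h := by
    have h1 : f x.1 = f y.1 := congrArg Prod.fst h
    have h2 : g x.2 = g y.2 := congrArg Prod.snd h
    obtain ⟨c₁, hc₁⟩ := IsLocalizedModule.exists_of_eq (S := S) (f := f) h1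
    obtain ⟨c₂, hc₂⟩ := IsLocalizedModule.exists_of_eq (S := S) (f := g) h2
    refine ⟨c₁ * c₂, Prod.ext ?_ ?_⟩
    · show ((c₁ * c₂ : S) • x).1 = ((c₁ * c₂ : S) • y).1
      rw [Prod.smul_fst, Prod.smul_fst, Submonoid.smul_def, Submonoid.smul_def,
        Submonoid.coe_mul, mul_comm, mul_smul, mul_smul, ← Submonoid.smul_def c₁,
        hc₁, Submonoid.smul_def]
    · show ((c₁ * c₂ : S) • x).2 = ((c₁ * c₂ : S) • y).2
      rw [Prod.smul_snd, Prod.smul_snd, Submonoid.smul_def, Submonoid.smul_def,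
        Submonoid.coe_mul, mul_smul, mul_smul, ← Submonoid.smul_def c₂,
        hc₂, Submonoid.smul_def]

/-- `V/L` computed inside `V` agrees with `V/L` computed inside a larger `U`. -/
noncomputable def my_quot_equiv {W : Type*} [AddCommGroup W] [Module R W]
    (L V U : Submodule R W) (hVU : V ≤ U) :
    (↥V ⧸ L.comap V.subtype) ≃ₗ[R]
      (↥(V.comap U.subtype) ⧸ (L.comap U.subtype).comap (V.comap U.subtype).subtype) :=
  Submodule.Quotient.equiv _ _ (Submodule.comapSubtypeEquivOfLe hVU).symm (by
    ext x
    constructor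
    · rintro ⟨y, hy, rfl⟩
      exact hy
    · intro hx
      exact ⟨Submodule.comapSubtypeEquivOfLe hVU x, hx,
        LinearEquiv.symm_apply_apply _ _⟩)

/-- The split short exact sequence `0 → B/A → M/A → M/B → 0`. -/
theorem my_split {M : Type*} [AddCommGroup M] [Module R M] (A B : Submodule R M)
    (hAB : A ≤ B) (hproj : Module.Projective R (M ⧸ B)) :
    Nonempty ((M ⧸ A) ≃ₗ[R] (↥B ⧸ A.comap B.subtype) × (M ⧸ B)) := by
  have hker : ker (A.mkQ ∘ₗ B.subtype) = A.comap B.subtype := by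
    rw [LinearMap.ker_comp, Submodule.ker_mkQ]
  let f : (↥B ⧸ A.comap B.subtype) →ₗ[R] M ⧸ A :=
    (A.comap B.subtype).liftQ (A.mkQ ∘ₗ B.subtype) hker.ge
  have hfinj : Function.Injective f := by
    rw [← LinearMap.ker_eq_bot]
    exact Submodule.ker_liftQ_eq_bot _ _ _ hker.le
  let g : (M ⧸ A) →ₗ[R] M ⧸ B := A.liftQ B.mkQ (by rw [Submodule.ker_mkQ]; exact hAB)
  have hgsurj : Function.Surjective g := by
    rw [← LinearMap.range_eq_top, Submodule.range_liftQ, Submodule.range_mkQ]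
  have hexact : Function.Exact f g := by
    rw [LinearMap.exact_iff]
    rw [Submodule.ker_liftQ, Submodule.range_liftQ, Submodule.ker_mkQ,
      LinearMap.range_comp, Submodule.range_subtype]
  obtain ⟨l, hl⟩ := Module.projective_lifting_property g LinearMap.id hgsurj
  exact ⟨(hexact.splitSurjectiveEquiv hfinj ⟨l, hl⟩).1⟩

/-- An `R`-linear equivalence between modules over a localization is linear over the
localization. -/
noncomputable def my_extend (S : Submonoid R) (Rₚ : Type*) [CommRing Rₚ] [Algebra R Rₚ]
    [IsLocalization S Rₚ] {X Y : Type*} [AddCommGroup X] [AddCommGroup Y]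
    [Module R X] [Module R Y] [Module Rₚ X] [Module Rₚ Y]
    [IsScalarTower R Rₚ X] [IsScalarTower R Rₚ Y]
    (e : X ≃ₗ[R] Y) : X ≃ₗ[Rₚ] Y :=
  LinearEquiv.ofLinear (e.toLinearMap.extendScalarsOfIsLocalization S Rₚ)
    (e.symm.toLinearMap.extendScalarsOfIsLocalization S Rₚ)
    (by ext x; simp) (by ext x; simp)

end Aux

theorem stmt15 (R W : Type*) [CommRing R] [AddCommGroup W] [Module R W]
    (L₁ L₂ V₁ V₂ : Submodule R W)
    (h12 : L₁ ≤ L₂) (hL1 : L₁ ≤ V₁) (hL2 : L₂ ≤ V₂) (hV : V₁ ≤ V₂)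
    (r c : ℕ)
    [Module.Finite R (↥V₁ ⧸ L₁.comap V₁.subtype)]
    (hp1 : Module.Projective R (↥V₁ ⧸ L₁.comap V₁.subtype))
    [Module.Finite R (↥V₂ ⧸ L₂.comap V₂.subtype)]
    (hp2 : Module.Projective R (↥V₂ ⧸ L₂.comap V₂.subtype))
    (hrank1 : ∀ (p : Ideal R) [p.IsPrime],
      Module.finrank (Localization p.primeCompl)
        (LocalizedModule p.primeCompl (↥V₁ ⧸ L₁.comap V₁.subtype)) = c)
    (hrank2 : ∀ (p : Ideal R) [p.IsPrime],
      Module.finrank (Localization p.primeCompl)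
        (LocalizedModule p.primeCompl (↥V₂ ⧸ L₂.comap V₂.subtype)) = c)
    (bfree : Module.Basis (Fin r) R (↥V₂ ⧸ V₁.comap V₂.subtype)) :
    Module.Projective R (↥L₂ ⧸ L₁.comap L₂.subtype) ∧
    ∀ (p : Ideal R) [p.IsPrime],
      Module.finrank (Localization p.primeCompl)
        (LocalizedModule p.primeCompl (↥L₂ ⧸ L₁.comap L₂.subtype)) = r := by
  classical
  haveI := hp1
  haveI := hp2
  haveI hpF : Module.Projective R (↥V₂ ⧸ V₁.comap V₂.subtype) := Module.Projective.of_basis bfree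
  haveI hfF : Module.Finite R (↥V₂ ⧸ V₁.comap V₂.subtype) := Module.Finite.of_basis bfree
  -- corner equivalences
  let qB := my_quot_equiv L₁ L₂ V₂ hL2
  let qC := my_quot_equiv L₁ V₁ V₂ hV
  obtain ⟨eB⟩ := my_split (L₁.comap V₂.subtype) (L₂.comap V₂.subtype)
    (Submodule.comap_mono h12) hp2
  obtain ⟨eC⟩ := my_split (L₁.comap V₂.subtype) (V₁.comap V₂.subtype)
    (Submodule.comap_mono hL1) hpF
  let E : ((↥L₂ ⧸ L₁.comap L₂.subtype) × (↥V₂ ⧸ L₂.comap V₂.subtype)) ≃ₗ[R]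
      ((↥V₁ ⧸ L₁.comap V₁.subtype) × (↥V₂ ⧸ V₁.comap V₂.subtype)) :=
    (qB.prodCongr (LinearEquiv.refl R _)) ≪≫ₗ eB.symm ≪≫ₗ eC ≪≫ₗ
      ((qC.symm).prodCongr (LinearEquiv.refl R _))
  have hsplit : (LinearMap.fst R (↥L₂ ⧸ L₁.comap L₂.subtype) (↥V₂ ⧸ L₂.comap V₂.subtype)
        ∘ₗ E.symm.toLinearMap) ∘ₗ (E.toLinearMap ∘ₗ LinearMap.inl R _ _) = LinearMap.id := by
    ext x
    all_goals simp
  haveI hQproj : Module.Projective R (↥L₂ ⧸ L₁.comap L₂.subtype) :=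
    Module.Projective.of_split (E.toLinearMap ∘ₗ LinearMap.inl R _ _)
      (LinearMap.fst R _ _ ∘ₗ E.symm.toLinearMap) hsplit
  haveI hQfin : Module.Finite R (↥L₂ ⧸ L₁.comap L₂.subtype) :=
    Module.Finite.of_surjective (LinearMap.fst R _ _ ∘ₗ E.symm.toLinearMap)
      (Prod.fst_surjective.comp E.symm.surjective)
  refine ⟨hQproj, ?_⟩
  intro p hp
  set S := p.primeCompl
  set Rₚ := Localization S
  haveI : IsLocalRing Rₚ := by
    exact Localization.AtPrime.isLocalRing p
  -- localized equivalence
  haveI hloc1 := my_isLocalizedModule_prodMap S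
    (LocalizedModule.mkLinearMap S (↥L₂ ⧸ L₁.comap L₂.subtype))
    (LocalizedModule.mkLinearMap S (↥V₂ ⧸ L₂.comap V₂.subtype))
  haveI hloc2 := my_isLocalizedModule_prodMap S
    (LocalizedModule.mkLinearMap S (↥V₁ ⧸ L₁.comap V₁.subtype))
    (LocalizedModule.mkLinearMap S (↥V₂ ⧸ V₁.comap V₂.subtype))
  let g₂ : ((↥L₂ ⧸ L₁.comap L₂.subtype) × (↥V₂ ⧸ L₂.comap V₂.subtype)) →ₗ[R]
      (LocalizedModule S (↥V₁ ⧸ L₁.comap V₁.subtype) ×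
        LocalizedModule S (↥V₂ ⧸ V₁.comap V₂.subtype)) :=
    ((LocalizedModule.mkLinearMap S (↥V₁ ⧸ L₁.comap V₁.subtype)).prodMap
      (LocalizedModule.mkLinearMap S (↥V₂ ⧸ V₁.comap V₂.subtype))) ∘ₗ (E : _ →ₗ[R] _)
  haveI hg₂ : IsLocalizedModule S g₂ := IsLocalizedModule.of_linearEquiv_right S _ E
  let Eloc : (LocalizedModule S (↥L₂ ⧸ L₁.comap L₂.subtype) ×
        LocalizedModule S (↥V₂ ⧸ L₂.comap V₂.subtype)) ≃ₗ[R]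
      (LocalizedModule S (↥V₁ ⧸ L₁.comap V₁.subtype) ×
        LocalizedModule S (↥V₂ ⧸ V₁.comap V₂.subtype)) :=
    (IsLocalizedModule.iso S
      ((LocalizedModule.mkLinearMap S (↥L₂ ⧸ L₁.comap L₂.subtype)).prodMap
        (LocalizedModule.mkLinearMap S (↥V₂ ⧸ L₂.comap V₂.subtype)))).symm ≪≫ₗ
      IsLocalizedModule.iso S g₂
  let Eloc' := my_extend S Rₚ Eloc
  -- instances for finrank computations
  haveI : Module.Finite Rₚ (LocalizedModule S (↥L₂ ⧸ L₁.comap L₂.subtype)) :=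
    Module.Finite.of_isLocalizedModule S (LocalizedModule.mkLinearMap S _)
  haveI : Module.Finite Rₚ (LocalizedModule S (↥V₂ ⧸ L₂.comap V₂.subtype)) :=
    Module.Finite.of_isLocalizedModule S (LocalizedModule.mkLinearMap S _)
  haveI : Module.Finite Rₚ (LocalizedModule S (↥V₁ ⧸ L₁.comap V₁.subtype)) :=
    Module.Finite.of_isLocalizedModule S (LocalizedModule.mkLinearMap S _)
  haveI : Module.Finite Rₚ (LocalizedModule S (↥V₂ ⧸ V₁.comap V₂.subtype)) :=
    Module.Finite.of_isLocalizedModule S (LocalizedModule.mkLinearMap S _)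
  haveI : Module.Projective Rₚ (LocalizedModule S (↥L₂ ⧸ L₁.comap L₂.subtype)) :=
    Module.projective_of_isLocalizedModule S (LocalizedModule.mkLinearMap S _)
  haveI : Module.Projective Rₚ (LocalizedModule S (↥V₂ ⧸ L₂.comap V₂.subtype)) :=
    Module.projective_of_isLocalizedModule S (LocalizedModule.mkLinearMap S _)
  haveI : Module.Projective Rₚ (LocalizedModule S (↥V₁ ⧸ L₁.comap V₁.subtype)) :=
    Module.projective_of_isLocalizedModule S (LocalizedModule.mkLinearMap S _)
  haveI : Module.FinitePresentation Rₚ (LocalizedModule S (↥L₂ ⧸ L₁.comap L₂.subtype)) :=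
    Module.finitePresentation_of_projective _ _
  haveI : Module.FinitePresentation Rₚ (LocalizedModule S (↥V₂ ⧸ L₂.comap V₂.subtype)) :=
    Module.finitePresentation_of_projective _ _
  haveI : Module.FinitePresentation Rₚ (LocalizedModule S (↥V₁ ⧸ L₁.comap V₁.subtype)) :=
    Module.finitePresentation_of_projective _ _
  haveI : Module.Free Rₚ (LocalizedModule S (↥L₂ ⧸ L₁.comap L₂.subtype)) :=
    Module.free_of_flat_of_isLocalRing
  haveI : Module.Free Rₚ (LocalizedModule S (↥V₂ ⧸ L₂.comap V₂.subtype)) :=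
    Module.free_of_flat_of_isLocalRing
  haveI : Module.Free Rₚ (LocalizedModule S (↥V₁ ⧸ L₁.comap V₁.subtype)) :=
    Module.free_of_flat_of_isLocalRing
  let bloc : Module.Basis (Fin r) Rₚ (LocalizedModule S (↥V₂ ⧸ V₁.comap V₂.subtype)) :=
    bfree.ofIsLocalizedModule Rₚ S (LocalizedModule.mkLinearMap S _)
  haveI : Module.Free Rₚ (LocalizedModule S (↥V₂ ⧸ V₁.comap V₂.subtype)) :=
    Module.Free.of_basis bloc
  have hfr : Module.finrank Rₚ (LocalizedModule S (↥V₂ ⧸ V₁.comap V₂.subtype)) = r := by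
    rw [Module.finrank_eq_card_basis bloc, Fintype.card_fin]
  have key := Eloc'.finrank_eq
  rw [Module.finrank_prod, Module.finrank_prod, hrank1 p, hrank2 p, hfr] at key
  show Module.finrank Rₚ (LocalizedModule S (↥L₂ ⧸ L₁.comap L₂.subtype)) = r
  omega
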